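/- Let m ≥ 1 be a natural number and let μ₁, μ₂ > 0. Let τ₁ and τ₂ be independent real random variables, where τ₁ has the Gamma distribution with shape m+1 and rate μ₁, and τ₂ has the Gamma distribution with shape m+1 and rate μ₂. Then P(τ₂ < τ₁) ≤ ((m + 1/2)/√(π m)) · ∫_{(μ₁−μ₂)/(μ₁+μ₂)}^{1} (1 − x²)^m dx. -/

import Mathlib

open MeasureTheory ProbabilityTheory Real Set Filter Topology Finset

namespace Stmt6Aux


lemma sqrt_pi_le_stirling {n : ℕ} (hn : 1 ≤ n) : Real.sqrt π ≤ Stirling.stirlingSeq n := by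
  refine le_of_tendsto Stirling.tendsto_stirlingSeq_sqrt_pi ?_
  filter_upwards [eventually_ge_atTop n] with k hk
  obtain ⟨a, rfl⟩ := Nat.exists_eq_add_of_le hn
  obtain ⟨b, rfl⟩ := Nat.exists_eq_add_of_le hk
  have := Stirling.stirlingSeq'_antitone (Nat.le_add_right a b)
  simpa [Function.comp, Nat.succ_eq_add_one, add_assoc, add_comm, add_left_comm] using this

lemma factorial_eq_stirling {n : ℕ} (hn : 1 ≤ n) :
    (n.factorial : ℝ) = Stirling.stirlingSeq n * (Real.sqrt (2 * n) * ((n : ℝ) / Real.exp 1) ^ n) := by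
  have h0 : (0:ℝ) < Real.sqrt (2 * n) * ((n : ℝ) / Real.exp 1) ^ n := by
    have : (0:ℝ) < (n:ℝ) := by exact_mod_cast hn
    positivity
  rw [Stirling.stirlingSeq, div_mul_cancel₀ _ h0.ne']

lemma centralBinom_sqrt_le {m : ℕ} (hm : 1 ≤ m) :
    (((2 * m).choose m : ℝ)) * Real.sqrt (π * m) ≤ 4 ^ m := by
  have hm0 : (0:ℝ) < (m:ℝ) := by exact_mod_cast hm
  set s1 := Stirling.stirlingSeq m with hs1
  set s2 := Stirling.stirlingSeq (2 * m) with hs2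
  have hs1p : 0 < s1 := by
    obtain ⟨a, rfl⟩ := Nat.exists_eq_add_of_le hm
    rw [hs1, add_comm]
    exact Stirling.stirlingSeq'_pos a
  have hs2p : 0 < s2 := by
    have : 1 ≤ 2 * m := by omega
    obtain ⟨a, ha⟩ := Nat.exists_eq_add_of_le this
    rw [hs2, ha, add_comm]
    exact Stirling.stirlingSeq'_pos a
  have hpi1 : Real.sqrt π ≤ s1 := sqrt_pi_le_stirling hm
  have hs21 : s2 ≤ s1 := by
    obtain ⟨a, rfl⟩ := Nat.exists_eq_add_of_le hm
    have h2 : 2 * (1 + a) = 1 + (a + (1 + a)) := by ring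
    have := Stirling.stirlingSeq'_antitone (Nat.le_add_right a (1 + a))
    simp only [Function.comp, Nat.succ_eq_add_one] at this
    rw [hs1, hs2, h2]
    rw [add_comm a 1, add_comm (a + (1 + a)) 1] at this; exact this
  -- factorials
  have hf1 : (m.factorial : ℝ) = s1 * (Real.sqrt (2 * m) * ((m : ℝ) / Real.exp 1) ^ m) :=
    factorial_eq_stirling hm
  have hf2 : ((2 * m).factorial : ℝ)
      = s2 * (Real.sqrt (2 * ((2 * m : ℕ) : ℝ)) * (((2 * m : ℕ) : ℝ) / Real.exp 1) ^ (2 * m)) :=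
    factorial_eq_stirling (by omega)
  have hchooseN : (2 * m).choose m * (m.factorial * m.factorial) = (2 * m).factorial := by
    have h := Nat.choose_mul_factorial_mul_factorial (n := 2 * m) (k := m) (by omega)
    have h2 : 2 * m - m = m := by omega
    rw [h2] at h
    rw [← h]; ring
  have hchoose : (((2 * m).choose m : ℝ)) * ((m.factorial : ℝ) * m.factorial)
      = ((2 * m).factorial : ℝ) := by exact_mod_cast congrArg (Nat.cast (R := ℝ)) hchooseN
  set C : ℝ := ((2 * m).choose m : ℝ) with hC
  set r : ℝ := Real.sqrt m with hrdef
  set w : ℝ := Real.sqrt (2 * m) with hwdef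
  set A : ℝ := ((m : ℝ) / Real.exp 1) ^ m with hAdef
  have hr0 : 0 < r := Real.sqrt_pos.mpr hm0
  have hA0 : 0 < A := by rw [hAdef]; positivity
  have hr2 : r ^ 2 = (m : ℝ) := Real.sq_sqrt hm0.le
  have hw2 : w ^ 2 = 2 * (m : ℝ) := Real.sq_sqrt (by positivity)
  have hsqrt4 : Real.sqrt (2 * ((2 * m : ℕ) : ℝ)) = 2 * r := by
    push_cast
    rw [show (2 : ℝ) * (2 * m) = 2 ^ 2 * m by ring, Real.sqrt_mul (by positivity),
      Real.sqrt_sq (by norm_num)]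
  have hB : (((2 * m : ℕ) : ℝ) / Real.exp 1) ^ (2 * m) = 4 ^ m * A ^ 2 := by
    push_cast
    rw [show (2 : ℝ) * m / Real.exp 1 = 2 * ((m : ℝ) / Real.exp 1) by ring, mul_pow,
      show (2 : ℝ) ^ (2 * m) = 4 ^ m by rw [pow_mul]; norm_num,
      hAdef, ← pow_mul, mul_comm m 2, pow_mul]
  have hEq : C * (s1 * (w * A)) ^ 2 = s2 * (2 * r * (4 ^ m * A ^ 2)) := by
    have h := hchoose
    rw [hf1, hf2, hsqrt4, hB] at h
    linear_combination h
  have key : C * (s1 ^ 2 * r) * (2 * r * A ^ 2) = s2 * 4 ^ m * (2 * r * A ^ 2) := by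
    linear_combination hEq + (2 * C * s1 ^ 2 * A ^ 2) * hr2 - (C * s1 ^ 2 * A ^ 2) * hw2
  have hCs : C * (s1 ^ 2 * r) = s2 * 4 ^ m :=
    mul_right_cancel₀ (by positivity) key
  have hsπm : Real.sqrt (π * m) = Real.sqrt π * r := Real.sqrt_mul pi_pos.le _
  rw [hsπm]
  have final : C * (Real.sqrt π * r) * s1 ^ 2 ≤ 4 ^ m * s1 ^ 2 := by
    calc C * (Real.sqrt π * r) * s1 ^ 2 = C * (s1 ^ 2 * r) * Real.sqrt π := by ring
    _ = s2 * 4 ^ m * Real.sqrt π := by rw [hCs]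
    _ = s2 * Real.sqrt π * 4 ^ m := by ring
    _ ≤ (s1 * s1) * 4 ^ m := by
        apply mul_le_mul_of_nonneg_right _ (by positivity)
        exact mul_le_mul hs21 hpi1 (Real.sqrt_nonneg _) hs1p.le
    _ = 4 ^ m * s1 ^ 2 := by ring
  exact le_of_mul_le_mul_right final (by positivity)



lemma integrableOn_pow_mul_exp (n : ℕ) {b : ℝ} (hb : 0 < b) :
    IntegrableOn (fun x : ℝ => x ^ n * Real.exp (-(b * x))) (Ioi 0) := by
  have h := integrableOn_rpow_mul_exp_neg_mul_rpow (s := (n : ℝ)) (p := 1)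
    (neg_one_lt_zero.trans_le (Nat.cast_nonneg n)) one_pos hb
  refine h.congr_fun (fun x hx => ?_) measurableSet_Ioi
  dsimp only
  rw [Real.rpow_natCast, Real.rpow_one, neg_mul]

lemma integral_pow_mul_exp (n : ℕ) {b : ℝ} (hb : 0 < b) :
    ∫ x in Ioi (0:ℝ), x ^ n * Real.exp (-(b * x)) = n.factorial / b ^ (n + 1) := by
  have h := integral_rpow_mul_exp_neg_mul_Ioi (a := (n : ℝ) + 1) (by positivity) hb
  simp_rw [add_sub_cancel_right, Real.rpow_natCast] at h
  rw [h, Real.Gamma_nat_eq_factorial,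
    show ((n : ℝ) + 1) = ((n + 1 : ℕ) : ℝ) by push_cast; ring, Real.rpow_natCast]
  rw [div_pow, one_pow]
  ring

/-- Derivative of the antiderivative of the integer-shape gamma density. -/
lemma hasDerivAt_gammaAnti (m : ℕ) (μ t : ℝ) :
    HasDerivAt
      (fun t => -(Real.exp (-(μ * t)) * ∑ k ∈ Finset.range (m + 1), (μ * t) ^ k / k.factorial))
      (μ ^ (m + 1) / m.factorial * t ^ m * Real.exp (-(μ * t))) t := by
  have hlin : HasDerivAt (fun t : ℝ => μ * t) μ t := by
    simpa using (hasDerivAt_id t).const_mul μ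
  have hE : HasDerivAt (fun t : ℝ => Real.exp (-(μ * t))) (-μ * Real.exp (-(μ * t))) t := by
    have := (Real.hasDerivAt_exp (-(μ * t))).comp t hlin.neg
    simpa [mul_comm, Function.comp_def] using this
  have hterm : ∀ k ∈ Finset.range (m + 1), HasDerivAt
      (fun t : ℝ => (μ * t) ^ k / k.factorial)
      ((k * (μ * t) ^ (k - 1) * μ) / k.factorial) t := by
    intro k _
    exact (((hasDerivAt_pow k (μ * t)).comp t hlin)).div_const _
  have hS : HasDerivAt
      (fun t : ℝ => ∑ k ∈ Finset.range (m + 1), (μ * t) ^ k / k.factorial)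
      (∑ k ∈ Finset.range (m + 1), (k * (μ * t) ^ (k - 1) * μ) / k.factorial) t :=
    HasDerivAt.fun_sum hterm
  have h := (hE.fun_mul hS).fun_neg
  refine h.congr_deriv (Eq.symm ?_)
  have hsum : ∑ k ∈ Finset.range (m + 1), ((k : ℝ) * (μ * t) ^ (k - 1) * μ) / k.factorial
      = μ * ∑ k ∈ Finset.range m, (μ * t) ^ k / k.factorial := by
    rw [Finset.sum_range_succ']
    simp only [Nat.cast_zero, zero_mul, pow_zero, Nat.factorial_zero, Nat.cast_one, zero_div,
      add_zero, Nat.add_sub_cancel]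
    rw [Finset.mul_sum]
    refine Finset.sum_congr rfl fun k _ => ?_
    rw [Nat.factorial_succ]
    push_cast
    field_simp
  rw [hsum]
  have hsplit : ∑ k ∈ Finset.range (m + 1), (μ * t) ^ k / k.factorial
      = (∑ k ∈ Finset.range m, (μ * t) ^ k / k.factorial) + (μ * t) ^ m / m.factorial :=
    Finset.sum_range_succ _ m
  rw [hsplit]
  rw [mul_pow, pow_succ]
  have : (m.factorial : ℝ) ≠ 0 := by exact_mod_cast m.factorial_ne_zero
  field_simp
  ring

lemma gammaPDF_eq_pow (m : ℕ) {μ : ℝ} {x : ℝ} (hx : 0 ≤ x) :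
    gammaPDF ((m : ℝ) + 1) μ x
      = ENNReal.ofReal (μ ^ (m + 1) / m.factorial * x ^ m * Real.exp (-(μ * x))) := by
  rw [gammaPDF_of_nonneg hx]
  congr 1
  rw [Real.Gamma_nat_eq_factorial,
    show ((m : ℝ) + 1) = ((m + 1 : ℕ) : ℝ) by push_cast; ring, Real.rpow_natCast,
    show ((m + 1 : ℕ) : ℝ) - 1 = ((m : ℕ) : ℝ) by push_cast; ring, Real.rpow_natCast]

lemma sum_at_zero (m : ℕ) (μ : ℝ) :
    ∑ k ∈ Finset.range (m + 1), (μ * 0) ^ k / (k.factorial : ℝ) = 1 := by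
  rw [Finset.sum_range_succ']
  simp

lemma gamma_Iio_nonneg (m : ℕ) {μ x : ℝ} (hμ : 0 < μ) (hx : 0 ≤ x) :
    gammaMeasure ((m : ℝ) + 1) μ (Iio x)
      = ENNReal.ofReal
          (1 - Real.exp (-(μ * x)) * ∑ k ∈ Finset.range (m + 1), (μ * x) ^ k / k.factorial) := by
  set f : ℝ → ℝ := fun t => μ ^ (m + 1) / m.factorial * t ^ m * Real.exp (-(μ * t)) with hf
  have hfc : Continuous f := by
    exact (continuous_const.mul (continuous_pow m)).mul
      (continuous_const.mul continuous_id).neg.rexp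
  rw [gammaMeasure, withDensity_apply _ measurableSet_Iio,
    ← Iio_union_Ico_eq_Iio hx,
    lintegral_union measurableSet_Ico (by simp only [Set.disjoint_iff_forall_ne, Set.mem_Iio, Set.mem_Ico]; intros; rintro rfl; linarith),
    lintegral_gammaPDF_of_nonpos le_rfl, zero_add]
  have hcong : ∫⁻ t in Ico 0 x, gammaPDF ((m : ℝ) + 1) μ t
      = ∫⁻ t in Ico 0 x, ENNReal.ofReal (f t) :=
    setLIntegral_congr_fun measurableSet_Ico (fun t ht => gammaPDF_eq_pow m ht.1)
  rw [hcong, ← ofReal_integral_eq_lintegral_ofReal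
    ((hfc.integrableOn_Icc).mono_set Ico_subset_Icc_self)
    ((ae_restrict_iff' measurableSet_Ico).mpr (ae_of_all _ fun t ht => by
      have h0 : (0:ℝ) ≤ t := ht.1
      rw [hf]; positivity))]
  congr 1
  have h1 : ∫ t in Ico 0 x, f t = ∫ t in (0:ℝ)..x, f t := by
    rw [intervalIntegral.integral_of_le hx, integral_Ico_eq_integral_Ioo,
      integral_Ioc_eq_integral_Ioo]
  rw [h1, intervalIntegral.integral_eq_sub_of_hasDerivAt
    (fun t _ => hasDerivAt_gammaAnti m μ t) (hfc.intervalIntegrable 0 x)]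
  rw [sum_at_zero m μ]
  simp
  ring

lemma gamma_Iio_nonpos (m : ℕ) {μ x : ℝ} (hx : x ≤ 0) :
    gammaMeasure ((m : ℝ) + 1) μ (Iio x) = 0 := by
  rw [gammaMeasure, withDensity_apply _ measurableSet_Iio, lintegral_gammaPDF_of_nonpos hx]

lemma cdf_nonneg_le_one (m : ℕ) {μ x : ℝ} (hμ : 0 < μ) (hx : 0 ≤ x) :
    0 ≤ 1 - Real.exp (-(μ * x)) * ∑ k ∈ Finset.range (m + 1), (μ * x) ^ k / k.factorial ∧
    1 - Real.exp (-(μ * x)) * ∑ k ∈ Finset.range (m + 1), (μ * x) ^ k / k.factorial ≤ 1 := by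
  have hS0 : 0 ≤ ∑ k ∈ Finset.range (m + 1), (μ * x) ^ k / (k.factorial : ℝ) :=
    Finset.sum_nonneg fun k _ => by positivity
  have hSe : ∑ k ∈ Finset.range (m + 1), (μ * x) ^ k / (k.factorial : ℝ) ≤ Real.exp (μ * x) :=
    Real.sum_le_exp_of_nonneg (by positivity) _
  have h2 : Real.exp (-(μ * x)) * Real.exp (μ * x) = 1 := by
    rw [← Real.exp_add]; simp
  constructor
  · nlinarith [Real.exp_pos (-(μ * x))]
  · nlinarith [Real.exp_pos (-(μ * x))]



/-- Derivative of `W u = ∑ C(m+k,k) (1-u)^(m+1) u^k`. -/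
lemma hasDerivAt_W (m : ℕ) (u : ℝ) :
    HasDerivAt
      (fun u : ℝ => ∑ k ∈ Finset.range (m + 1),
        (((m + k).choose k : ℝ)) * ((1 - u) ^ (m + 1) * u ^ k))
      (-(((2 * m + 1) * ((2 * m).choose m) : ℝ) * (u ^ m * (1 - u) ^ m))) u := by
  set φ : ℕ → ℝ := fun k => (1 - u) ^ m * (((m + k).choose k : ℝ) * k * u ^ (k - 1)) with hφ
  have hone : HasDerivAt (fun u : ℝ => 1 - u) (-1) u := by
    simpa using (hasDerivAt_const u (1:ℝ)).fun_sub (hasDerivAt_id u)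
  have hterm : ∀ k ∈ Finset.range (m + 1), HasDerivAt
      (fun u : ℝ => (((m + k).choose k : ℝ)) * ((1 - u) ^ (m + 1) * u ^ k))
      (φ k - φ (k + 1)) u := by
    intro k hk
    have h1 : HasDerivAt (fun u : ℝ => (1 - u) ^ (m + 1))
        (((m + 1 : ℕ) : ℝ) * (1 - u) ^ m * (-1)) u := by
      have := (hasDerivAt_pow (m + 1) (1 - u)).comp u hone
      simpa [Function.comp_def] using this
    have h2 : HasDerivAt (fun u : ℝ => u ^ k) ((k : ℝ) * u ^ (k - 1)) u := hasDerivAt_pow k u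
    have h := ((h1.fun_mul h2).const_mul (((m + k).choose k : ℝ)))
    refine h.congr_deriv (Eq.symm ?_)
    -- identity: φ k - φ (k+1) = C * ((m+1)(1-u)^m(-1) u^k + (1-u)^(m+1) * (k u^(k-1)))
    have hc1 : (((m + (k + 1)).choose (k + 1) : ℝ)) * (k + 1)
        = ((m + k + 1 : ℕ) : ℝ) * ((m + k).choose k : ℝ) := by
      have := Nat.add_one_mul_choose_eq (m + k) k
      have h' : ((m + k).succ * (m + k).choose k : ℕ) = ((m + k + 1).choose (k + 1) * (k + 1) : ℕ) := this
      have h'' := congrArg (Nat.cast (R := ℝ)) h'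
      push_cast at h'' ⊢
      rw [show m + (k + 1) = m + k + 1 by ring]
      linarith
    rcases Nat.eq_zero_or_pos k with rfl | hkpos
    · simp only [φ, Nat.add_zero, Nat.choose_zero_right, Nat.choose_one_right,
        Nat.add_eq, Nat.zero_add]
      norm_num [Nat.choose_one_right]
      push_cast
      ring
    · obtain ⟨j, rfl⟩ := Nat.exists_eq_succ_of_ne_zero hkpos.ne'
      simp only [φ, Nat.succ_sub_one, Nat.succ_eq_add_one]
      push_cast at hc1 ⊢
      linear_combination (-((1 - u) ^ m * u ^ (j + 1))) * hc1
  have hsum := HasDerivAt.fun_sum hterm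
  have htel : ∑ k ∈ Finset.range (m + 1), (φ k - φ (k + 1)) = φ 0 - φ (m + 1) :=
    Finset.sum_range_sub' φ (m + 1)
  rw [htel] at hsum
  refine hsum.congr_deriv (Eq.symm ?_)
  have hva : (((m + (m + 1)).choose (m + 1) : ℝ)) * ((m + 1 : ℕ) : ℝ)
      = ((2 * m + 1) * ((2 * m).choose m) : ℝ) := by
    have := Nat.add_one_mul_choose_eq (2 * m) m
    have h' := congrArg (Nat.cast (R := ℝ)) this
    push_cast at h' ⊢
    rw [show m + (m + 1) = 2 * m + 1 by ring]
    linarith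
  simp only [φ]
  rw [Nat.add_sub_cancel]
  push_cast at hva ⊢
  linear_combination (u ^ m * (1 - u) ^ m) * hva


lemma W_zero (m : ℕ) :
    ∑ k ∈ Finset.range (m + 1), (((m + k).choose k : ℝ)) * ((1 - 0) ^ (m + 1) * 0 ^ k) = 1 := by
  rw [Finset.sum_range_succ']
  simp

lemma one_sub_sum_eq_integral (m : ℕ) (q : ℝ) :
    1 - ∑ k ∈ Finset.range (m + 1), (((m + k).choose k : ℝ)) * ((1 - q) ^ (m + 1) * q ^ k)
      = ((2 * m + 1) * ((2 * m).choose m) : ℝ) * ∫ t in (0:ℝ)..q, t ^ m * (1 - t) ^ m := by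
  have hcont : Continuous (fun u : ℝ =>
      -(((2 * m + 1) * ((2 * m).choose m) : ℝ) * (u ^ m * (1 - u) ^ m))) := by
    exact (continuous_const.mul ((continuous_pow m).mul
      ((continuous_const.sub continuous_id).pow m))).neg
  have h := intervalIntegral.integral_eq_sub_of_hasDerivAt
    (fun t _ => hasDerivAt_W m t) (hcont.intervalIntegrable 0 q)
  rw [intervalIntegral.integral_neg, intervalIntegral.integral_const_mul] at h
  rw [W_zero m] at h
  linarith [h]

lemma integral_sub_interval (m : ℕ) (q : ℝ) :
    ∫ x in (1 - 2 * q)..(1:ℝ), (1 - x ^ 2) ^ m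
      = (2 * 4 ^ m) * ∫ t in (0:ℝ)..q, t ^ m * (1 - t) ^ m := by
  have hg : ∀ x ∈ uIcc (0:ℝ) q, HasDerivAt (fun t : ℝ => 1 - 2 * t) (-2) x := by
    intro x _
    simpa using (hasDerivAt_const x (1:ℝ)).fun_sub ((hasDerivAt_id x).const_mul (2:ℝ))
  have h := intervalIntegral.integral_comp_smul_deriv (g := fun x : ℝ => (1 - x ^ 2) ^ m)
    hg continuousOn_const (by continuity)
  simp only [Function.comp, smul_eq_mul] at h
  have hpt : ∀ t : ℝ, (-2 : ℝ) * (1 - (1 - 2 * t) ^ 2) ^ m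
      = (-(2 * 4 ^ m)) * (t ^ m * (1 - t) ^ m) := by
    intro t
    rw [show (1 - (1 - 2 * t) ^ 2) = 4 * (t * (1 - t)) by ring, mul_pow,
      show (4:ℝ) ^ m * (t * (1 - t)) ^ m = 4 ^ m * (t ^ m * (1 - t) ^ m) by rw [mul_pow]]
    ring
  rw [intervalIntegral.integral_congr (g := fun t : ℝ =>
      (-(2 * 4 ^ m)) * (t ^ m * (1 - t) ^ m)) (fun t _ => hpt t)] at h
  rw [intervalIntegral.integral_const_mul] at h
  norm_num at h
  rw [intervalIntegral.integral_symm, ← h]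
  ring


end Stmt6Aux

open Stmt6Aux in
open MeasureTheory ProbabilityTheory Real in
/-- Probability that one Gamma(m+1, μ₂) variable is smaller than an
independent Gamma(m+1, μ₁) variable. -/
theorem stmt_6 (m : ℕ) (hm : 1 ≤ m) (μ₁ μ₂ : ℝ) (hμ₁ : 0 < μ₁) (hμ₂ : 0 < μ₂)
    {Ω : Type*} [MeasurableSpace Ω] (P : Measure Ω) [IsProbabilityMeasure P]
    (τ₁ τ₂ : Ω → ℝ) (hτ₁ : Measurable τ₁) (hτ₂ : Measurable τ₂)
    (hind : IndepFun τ₁ τ₂ P)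
    (hd₁ : P.map τ₁ = gammaMeasure ((m : ℝ) + 1) μ₁)
    (hd₂ : P.map τ₂ = gammaMeasure ((m : ℝ) + 1) μ₂) :
    (P {ω | τ₂ ω < τ₁ ω}).toReal
      ≤ ((m + 1 / 2 : ℝ) / Real.sqrt (Real.pi * m))
          * ∫ x in ((μ₁ - μ₂) / (μ₁ + μ₂))..(1 : ℝ), (1 - x ^ 2) ^ m := by
  have hμs : 0 < μ₁ + μ₂ := by linarith
  set q : ℝ := μ₂ / (μ₁ + μ₂) with hq
  have hq0 : 0 < q := div_pos hμ₂ hμs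
  have hq1 : q < 1 := by rw [hq, div_lt_one hμs]; linarith
  have hcq : (μ₁ - μ₂) / (μ₁ + μ₂) = 1 - 2 * q := by
    rw [hq]; field_simp; ring
  have h1q : 1 - q = μ₁ / (μ₁ + μ₂) := by rw [hq]; field_simp; ring
  haveI hP1 : IsProbabilityMeasure (gammaMeasure ((m : ℝ) + 1) μ₁) :=
    isProbabilityMeasure_gammaMeasure (by positivity) hμ₁
  haveI hP2 : IsProbabilityMeasure (gammaMeasure ((m : ℝ) + 1) μ₂) :=
    isProbabilityMeasure_gammaMeasure (by positivity) hμ₂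
  -- Step 1: reduce to an integral of the CDF against the first gamma measure
  have hmap : P.map (fun ω => (τ₁ ω, τ₂ ω))
      = (gammaMeasure ((m : ℝ) + 1) μ₁).prod (gammaMeasure ((m : ℝ) + 1) μ₂) := by
    rw [← hd₁, ← hd₂]
    exact (ProbabilityTheory.indepFun_iff_map_prod_eq_prod_map_map hτ₁.aemeasurable
      hτ₂.aemeasurable).mp hind
  have hsetm : MeasurableSet {p : ℝ × ℝ | p.2 < p.1} :=
    measurableSet_lt measurable_snd measurable_fst
  have hstep1 : P {ω | τ₂ ω < τ₁ ω}
      = ∫⁻ x, gammaMeasure ((m : ℝ) + 1) μ₂ (Iio x) ∂(gammaMeasure ((m : ℝ) + 1) μ₁) := by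
    have hpre : {ω | τ₂ ω < τ₁ ω} = (fun ω => (τ₁ ω, τ₂ ω)) ⁻¹' {p : ℝ × ℝ | p.2 < p.1} := rfl
    rw [hpre, ← Measure.map_apply (hτ₁.prodMk hτ₂) hsetm, hmap, Measure.prod_apply hsetm]
    rfl
  -- the CDF of the second gamma measure
  set S : ℝ → ℝ := fun x => ∑ k ∈ Finset.range (m + 1), (μ₂ * x) ^ k / k.factorial with hSdef
  set F : ℝ → ℝ := fun x => if 0 ≤ x then 1 - Real.exp (-(μ₂ * x)) * S x else 0 with hFdef
  have hFx : ∀ x, gammaMeasure ((m : ℝ) + 1) μ₂ (Iio x) = ENNReal.ofReal (F x) := by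
    intro x
    by_cases hx : 0 ≤ x
    · rw [hFdef]; simp only [if_pos hx]
      exact gamma_Iio_nonneg m hμ₂ hx
    · rw [hFdef]; simp only [if_neg hx]
      rw [gamma_Iio_nonpos m (le_of_not_ge hx)]
      simp
  have hF0 : ∀ x, 0 ≤ F x := by
    intro x
    rw [hFdef]
    by_cases hx : 0 ≤ x
    · simp only [if_pos hx]
      exact (cdf_nonneg_le_one m hμ₂ hx).1
    · simp [if_neg hx]
  have hF1 : ∀ x, F x ≤ 1 := by
    intro x
    rw [hFdef]
    by_cases hx : 0 ≤ x
    · simp only [if_pos hx]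
      exact (cdf_nonneg_le_one m hμ₂ hx).2
    · simp [if_neg hx]
  have hScont : Continuous S := by
    apply continuous_finset_sum
    intro k _
    exact ((continuous_const.mul continuous_id).pow k).div_const _
  have hFm : Measurable F := by
    apply Measurable.ite measurableSet_Ici _ measurable_const
    exact (continuous_const.sub (((continuous_const.mul continuous_id).neg.rexp).mul
      hScont)).measurable
  set f₁ : ℝ → ℝ := fun x => μ₁ ^ (m + 1) / m.factorial * x ^ m * Real.exp (-(μ₁ * x))
    with hf₁def
  have hf₁cont : Continuous f₁ :=
    ((continuous_const.mul (continuous_pow m)).mul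
      (continuous_const.mul continuous_id).neg.rexp)
  have hf₁int : IntegrableOn f₁ (Ioi 0) := by
    have h := (integrableOn_pow_mul_exp m hμ₁).const_mul (μ₁ ^ (m + 1) / m.factorial)
    simpa only [hf₁def, mul_assoc, IntegrableOn] using h
  have hF00 : F 0 = 0 := by
    rw [hFdef]
    simp only [if_pos le_rfl, hSdef]
    rw [sum_at_zero m μ₂]
    norm_num
  -- Step 2: pass to a real integral
  have hstep2 : ∫⁻ x, ENNReal.ofReal (F x) ∂(gammaMeasure ((m : ℝ) + 1) μ₁)
      = ENNReal.ofReal (∫ x in Ioi 0, f₁ x * F x) := by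
    have hpdfm : Measurable (gammaPDF ((m : ℝ) + 1) μ₁) :=
      (measurable_gammaPDFReal _ _).ennreal_ofReal
    rw [gammaMeasure, lintegral_withDensity_eq_lintegral_mul _ hpdfm hFm.ennreal_ofReal]
    have hzero : ∫⁻ x in (Ioi (0:ℝ))ᶜ,
        (gammaPDF ((m : ℝ) + 1) μ₁ * fun x => ENNReal.ofReal (F x)) x = 0 := by
      rw [compl_Ioi]
      rw [setLIntegral_congr_fun measurableSet_Iic (fun x (hx : x ≤ 0) => ?_),
        lintegral_zero]
      rcases lt_or_eq_of_le hx with h | h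
      · simp [gammaPDF_of_neg h]
      · subst h
        simp [hF00]
    rw [← lintegral_add_compl _ measurableSet_Ioi (μ := volume), hzero, add_zero]
    have hcong : ∫⁻ x in Ioi (0:ℝ),
        (gammaPDF ((m : ℝ) + 1) μ₁ * fun x => ENNReal.ofReal (F x)) x
        = ∫⁻ x in Ioi (0:ℝ), ENNReal.ofReal (f₁ x * F x) := by
      refine setLIntegral_congr_fun measurableSet_Ioi (fun x (hx : 0 < x) => ?_)
      simp only [Pi.mul_apply]
      rw [gammaPDF_eq_pow m hx.le, ← ENNReal.ofReal_mul (by positivity)]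
    rw [hcong]
    rw [← ofReal_integral_eq_lintegral_ofReal]
    · refine Integrable.mono hf₁int ((hf₁cont.measurable.mul hFm).aestronglyMeasurable) ?_
      refine (ae_restrict_iff' measurableSet_Ioi).mpr (ae_of_all _ (fun x (hx : 0 < x) => ?_))
      rw [norm_mul]
      have : ‖F x‖ ≤ 1 := by
        rw [Real.norm_eq_abs, abs_le]
        exact ⟨by linarith [hF0 x], hF1 x⟩
      calc ‖f₁ x‖ * ‖F x‖ ≤ ‖f₁ x‖ * 1 := by
            exact mul_le_mul_of_nonneg_left this (norm_nonneg _)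
        _ = ‖f₁ x‖ := mul_one _
    · refine (ae_restrict_iff' measurableSet_Ioi).mpr (ae_of_all _ (fun x (hx : 0 < x) => ?_))
      exact mul_nonneg (by rw [hf₁def]; positivity) (hF0 x)
  -- Step 3: compute the real integral
  have hexp : ∀ x : ℝ, Real.exp (-(μ₁ * x)) * Real.exp (-(μ₂ * x))
      = Real.exp (-((μ₁ + μ₂) * x)) := by
    intro x
    rw [← Real.exp_add]
    ring_nf
  have hval : ∫ x in Ioi (0:ℝ), f₁ x * F x
      = 1 - ∑ k ∈ Finset.range (m + 1),
          (((m + k).choose k : ℝ)) * ((1 - q) ^ (m + 1) * q ^ k) := by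
    have hpoint : EqOn (fun x => f₁ x * F x)
        (fun x => f₁ x - ∑ k ∈ Finset.range (m + 1),
          (μ₁ ^ (m + 1) / m.factorial * (μ₂ ^ k / k.factorial))
            * (x ^ (m + k) * Real.exp (-((μ₁ + μ₂) * x)))) (Ioi 0) := by
      intro x hx
      have hx0 : (0:ℝ) ≤ x := (mem_Ioi.mp hx).le
      simp only [hFdef, hSdef, if_pos hx0, hf₁def]
      rw [mul_sub, mul_one, Finset.mul_sum, Finset.mul_sum]
      congr 1
      refine Finset.sum_congr rfl (fun k _ => ?_)
      rw [mul_pow, pow_add, ← hexp x]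
      field_simp
      ring
    rw [setIntegral_congr_fun measurableSet_Ioi hpoint]
    have hintk : ∀ k : ℕ, IntegrableOn (fun x : ℝ =>
        (μ₁ ^ (m + 1) / m.factorial * (μ₂ ^ k / k.factorial))
          * (x ^ (m + k) * Real.exp (-((μ₁ + μ₂) * x)))) (Ioi 0) :=
      fun k => (integrableOn_pow_mul_exp (m + k) hμs).const_mul _
    rw [integral_sub hf₁int (integrable_finset_sum _ (fun k _ => hintk k)),
      integral_finset_sum _ (fun k _ => hintk k)]
    have hI1 : ∫ x in Ioi (0:ℝ), f₁ x = 1 := by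
      simp only [hf₁def, mul_assoc]
      rw [integral_const_mul, integral_pow_mul_exp m hμ₁]
      field_simp
    rw [hI1]
    congr 1
    refine Finset.sum_congr rfl (fun k _ => ?_)
    rw [integral_const_mul, integral_pow_mul_exp (m + k) hμs]
    have hch : (((m + k).choose k : ℝ)) = (m + k).factorial / (k.factorial * m.factorial) := by
      rw [Nat.cast_choose ℝ (Nat.le_add_left k m), Nat.add_sub_cancel]
    rw [hch, h1q, hq, div_pow, div_pow]
    have hm0 : ((m.factorial : ℝ)) ≠ 0 := by exact_mod_cast m.factorial_ne_zero
    have hk0 : ((k.factorial : ℝ)) ≠ 0 := by exact_mod_cast k.factorial_ne_zero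
    rw [show (m + k + 1 : ℕ) = (m + 1) + k by omega, pow_add]
    field_simp
    ring
  -- Assemble
  have hPval : (P {ω | τ₂ ω < τ₁ ω}).toReal
      = ((2 * m + 1) * ((2 * m).choose m) : ℝ) * ∫ t in (0:ℝ)..q, t ^ m * (1 - t) ^ m := by
    rw [hstep1, lintegral_congr hFx, hstep2, ENNReal.toReal_ofReal, hval,
      one_sub_sum_eq_integral m q]
    refine setIntegral_nonneg measurableSet_Ioi (fun x hx => ?_)
    have hx' : (0:ℝ) < x := hx
    exact mul_nonneg (by rw [hf₁def]; positivity) (hF0 x)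
  rw [hPval, hcq, integral_sub_interval m q]
  have hI : 0 ≤ ∫ t in (0:ℝ)..q, t ^ m * (1 - t) ^ m := by
    refine intervalIntegral.integral_nonneg hq0.le (fun t ht => ?_)
    exact mul_nonneg (pow_nonneg ht.1 _) (pow_nonneg (by linarith [ht.2, hq1.le]) _)
  have hmR : (0:ℝ) < (m:ℝ) := by exact_mod_cast hm
  have hπm : 0 < Real.sqrt (π * m) := Real.sqrt_pos.mpr (by positivity)
  have hcb := centralBinom_sqrt_le hm
  have hcoef : ((2 * m + 1) * ((2 * m).choose m) : ℝ)
      ≤ ((m : ℝ) + 1 / 2) / Real.sqrt (π * m) * (2 * 4 ^ m) := by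
    rw [div_mul_eq_mul_div, le_div_iff₀ hπm]
    push_cast
    calc ((2 * (m:ℝ) + 1) * ((2 * m).choose m : ℝ)) * Real.sqrt (π * m)
        = (2 * (m:ℝ) + 1) * (((2 * m).choose m : ℝ) * Real.sqrt (π * m)) := by ring
      _ ≤ (2 * (m:ℝ) + 1) * 4 ^ m := mul_le_mul_of_nonneg_left hcb (by positivity)
      _ = ((m:ℝ) + 1 / 2) * (2 * 4 ^ m) := by ring
  calc ((2 * m + 1) * ((2 * m).choose m) : ℝ) * ∫ t in (0:ℝ)..q, t ^ m * (1 - t) ^ m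
      ≤ (((m : ℝ) + 1 / 2) / Real.sqrt (π * m) * (2 * 4 ^ m))
          * ∫ t in (0:ℝ)..q, t ^ m * (1 - t) ^ m := mul_le_mul_of_nonneg_right hcoef hI
    _ = ((m : ℝ) + 1 / 2) / Real.sqrt (π * m)
          * (2 * 4 ^ m * ∫ t in (0:ℝ)..q, t ^ m * (1 - t) ^ m) := by ring
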